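/- If κ is a closed gauge with κ⁻¹(0) = {0}, then the polar gauge κ° is finite everywhere, i.e., dom κ° = X. -/

import Mathlib

open scoped RealInnerProductSpace ENNReal

def IsGauge {E : Type*} [NormedAddCommGroup E] [NormedSpace ℝ E] (κ : E → ℝ≥0∞) : Prop :=
  κ 0 = 0 ∧
  (∀ (c : ℝ) (x : E), 0 ≤ c → κ (c • x) = ENNReal.ofReal c * κ x) ∧
  (∀ (x y : E) (a b : ℝ), 0 ≤ a → 0 ≤ b → a + b = 1 →
    κ (a • x + b • y) ≤ ENNReal.ofReal a * κ x + ENNReal.ofReal b * κ y)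

/-- The polar gauge, in its sup form: `κ°(y) = sup {⟨x,y⟩ : κ(x) ≤ 1}`. -/
noncomputable def polarGauge {E : Type*} [NormedAddCommGroup E] [InnerProductSpace ℝ E]
    (κ : E → ℝ≥0∞) (y : E) : ℝ≥0∞ :=
  ⨆ (x : E) (_ : κ x ≤ 1), ENNReal.ofReal ⟪x, y⟫

/-- A lower semicontinuous `ℝ≥0∞`-valued function vanishing only at the origin admits a
positive lower bound on the unit sphere of a finite-dimensional space. -/
lemma exists_pos_lb_on_sphere {E : Type*} [NormedAddCommGroup E]
    [NormedSpace ℝ E] [FiniteDimensional ℝ E] (κ : E → ℝ≥0∞)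
    (hclosed : LowerSemicontinuous κ) (hzero : ∀ x : E, κ x = 0 → x = 0) :
    ∃ ε : ℝ, 0 < ε ∧ ∀ x : E, ‖x‖ = 1 → ENNReal.ofReal ε ≤ κ x := by
  by_contra h
  push_neg at h
  have hseq : ∀ n : ℕ, ∃ x : E, ‖x‖ = 1 ∧ κ x < ENNReal.ofReal (1 / (n + 1)) := by
    intro n
    obtain ⟨x, hx1, hx2⟩ := h (1 / (n + 1)) (by positivity)
    exact ⟨x, hx1, hx2⟩
  choose x hx1 hx2 using hseq
  have hmem : ∀ n, x n ∈ Metric.sphere (0 : E) 1 := by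
    intro n; simpa [Metric.mem_sphere, dist_zero_right] using hx1 n
  obtain ⟨a, ha, φ, hφ, hconv⟩ :=
    (isCompact_sphere (0 : E) 1).tendsto_subseq hmem
  have ha1 : ‖a‖ = 1 := by simpa [dist_zero_right] using ha
  have ha0 : a ≠ 0 := by
    intro h0; rw [h0, norm_zero] at ha1; norm_num at ha1
  have hκa : 0 < κ a := by
    rcases (zero_le : 0 ≤ κ a).lt_or_eq with h' | h'
    · exact h'
    · exact absurd (hzero a h'.symm) ha0
  set y : ℝ≥0∞ := min (κ a) 1 / 2 with hy
  have hymin_pos : 0 < min (κ a) 1 := lt_min hκa zero_lt_one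
  have hymin_ne_top : min (κ a) 1 ≠ ⊤ := (min_le_right _ _).trans_lt ENNReal.one_lt_top |>.ne
  have hy_pos : 0 < y := ENNReal.div_pos hymin_pos.ne' ENNReal.ofNat_ne_top
  have hy_lt : y < κ a := by
    calc y < min (κ a) 1 := ENNReal.half_lt_self hymin_pos.ne' hymin_ne_top
    _ ≤ κ a := min_le_left _ _
  have hy_ne_top : y ≠ ⊤ := by
    refine (ENNReal.div_lt_top hymin_ne_top (by norm_num)).ne
  -- eventually `y < κ (x (φ n))` by lower semicontinuity,
  have hev : ∀ᶠ n in Filter.atTop, y < κ (x (φ n)) := by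
    have := hclosed a y hy_lt
    exact hconv.eventually this
  -- but `κ (x (φ n)) → 0`, so eventually `κ (x (φ n)) < y`.
  have hto : ∀ᶠ n in Filter.atTop, κ (x (φ n)) < y := by
    obtain ⟨N, hN⟩ := exists_nat_gt (1 / y.toReal)
    filter_upwards [Filter.eventually_ge_atTop N] with n hn
    have hφn : (N : ℝ) ≤ (φ n : ℝ) := by
      exact_mod_cast hn.trans (hφ.le_apply)
    have hlt : (1 : ℝ) / (φ n + 1) < y.toReal := by
      rw [div_lt_iff₀ (by positivity)]
      have hyt : 0 < y.toReal := ENNReal.toReal_pos hy_pos.ne' hy_ne_top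
      have h1 : 1 / y.toReal < (φ n : ℝ) + 1 := by linarith
      calc (1:ℝ) = y.toReal * (1 / y.toReal) := by field_simp
        _ < y.toReal * ((φ n : ℝ) + 1) := by
            exact mul_lt_mul_of_pos_left h1 hyt
    calc κ (x (φ n)) < ENNReal.ofReal (1 / (φ n + 1)) := hx2 (φ n)
      _ < y := by
          rw [← ENNReal.ofReal_toReal hy_ne_top]
          exact ENNReal.ofReal_lt_ofReal_iff_of_nonneg (by positivity) |>.mpr hlt
  obtain ⟨n, h1, h2⟩ := (hev.and hto).exists
  exact absurd h1 (not_lt.mpr h2.le)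

theorem polarGauge_finite_of_closed_of_zero_only_at_origin {E : Type*} [NormedAddCommGroup E]
    [InnerProductSpace ℝ E] [FiniteDimensional ℝ E] (κ : E → ℝ≥0∞) (hκ : IsGauge κ)
    (hclosed : LowerSemicontinuous κ) (hzero : ∀ x : E, κ x = 0 → x = 0) :
    ∀ y : E, polarGauge κ y < ⊤ := by
  obtain ⟨h0, hhom, -⟩ := hκ
  intro y
  obtain ⟨ε, hε, hlb⟩ := exists_pos_lb_on_sphere κ hclosed hzero
  have hbound : ∀ x : E, κ x ≤ 1 → ‖x‖ ≤ ε⁻¹ := by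
    intro x hx
    by_cases hx0 : x = 0
    · rw [hx0, norm_zero]; positivity
    · have hnx : (0:ℝ) < ‖x‖ := norm_pos_iff.mpr hx0
      have hu : ‖(‖x‖⁻¹ • x)‖ = 1 := by
        rw [norm_smul, norm_inv, norm_norm, inv_mul_cancel₀ hnx.ne']
      have h1 : ENNReal.ofReal ε ≤ κ (‖x‖⁻¹ • x) := hlb _ hu
      have h2 : κ x = ENNReal.ofReal ‖x‖ * κ (‖x‖⁻¹ • x) := by
        conv_lhs => rw [← smul_inv_smul₀ hnx.ne' x]
        exact hhom ‖x‖ _ (norm_nonneg x)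
      have h3 : ENNReal.ofReal (‖x‖ * ε) ≤ 1 := by
        rw [ENNReal.ofReal_mul (norm_nonneg x)]
        calc ENNReal.ofReal ‖x‖ * ENNReal.ofReal ε
            ≤ ENNReal.ofReal ‖x‖ * κ (‖x‖⁻¹ • x) := mul_le_mul_right h1 _
          _ = κ x := h2.symm
          _ ≤ 1 := hx
      have h4 : ‖x‖ * ε ≤ 1 := by
        by_contra hc
        push_neg at hc
        exact absurd h3 (not_le.mpr (ENNReal.one_lt_ofReal.mpr hc))
      rw [← one_div, le_div_iff₀ hε]
      exact h4
  have hle : polarGauge κ y ≤ ENNReal.ofReal (ε⁻¹ * ‖y‖) := by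
    refine iSup₂_le fun x hx => ENNReal.ofReal_le_ofReal ?_
    calc ⟪x, y⟫ ≤ ‖x‖ * ‖y‖ := real_inner_le_norm x y
      _ ≤ ε⁻¹ * ‖y‖ := mul_le_mul_of_nonneg_right (hbound x hx) (norm_nonneg y)
  exact hle.trans_lt ENNReal.ofReal_lt_top
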